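/- Let e_n be the number of Z_3-symmetric non-crossing perfect matchings of the sides of a regular 6n-gon with one marked side (genus-zero pairwise side gluings invariant under rotation by 2π/3). Then e_n = binom(2n, n). -/

import Mathlib

open Finset
set_option linter.unusedSectionVars false


/-- `c` lies strictly between `a` and `b` going counterclockwise around the `n`-gon. -/
def PolyBtw (n : ℕ) (a c b : Fin n) : Prop :=
  0 < (c - a).val ∧ (c - a).val < (b - a).val

/-- `e` is a diagonal of the convex `n`-gon: a pair of non-adjacent vertices. -/
def PolyIsDiag (n : ℕ) (e : Finset (Fin n)) : Prop :=
  ∃ a b : Fin n, e = {a, b} ∧ 2 ≤ (b - a).val ∧ 2 ≤ (a - b).val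

/-- Two chords of the `n`-gon cross (interiors of the chords intersect). -/
def PolyCross (n : ℕ) (e f : Finset (Fin n)) : Prop :=
  ∃ a b c d : Fin n, e = {a, b} ∧ f = {c, d} ∧ PolyBtw n a c b ∧ PolyBtw n b d a

/-- A triangulation of a convex `n`-gon by non-crossing diagonals, encoded as a
maximal family of pairwise non-crossing diagonals (such a family has `n - 3` members). -/
structure PolyTriangulation (n : ℕ) where
  diags : Finset (Finset (Fin n))
  isDiag : ∀ e ∈ diags, PolyIsDiag n e
  noncross : ∀ e ∈ diags, ∀ f ∈ diags, e ≠ f → ¬ PolyCross n e f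
  card_diags : diags.card = n - 3

/-- A non-crossing perfect matching of the `m` sides of an `m`-gon (sides indexed by
`Fin m`), i.e. a genus-zero pairwise gluing of the sides. -/
structure PolyNCMatching (m : ℕ) where
  pairs : Finset (Finset (Fin m))
  card_two : ∀ e ∈ pairs, e.card = 2
  disj : ∀ e ∈ pairs, ∀ f ∈ pairs, e ≠ f → Disjoint e f
  cover : ∀ i : Fin m, ∃ e ∈ pairs, i ∈ e
  noncross : ∀ e ∈ pairs, ∀ f ∈ pairs, e ≠ f → ¬ PolyCross m e f


namespace Z3Gluing

section Basic

variable (n : ℕ) [NeZero n]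

lemma npos : 0 < n := Nat.pos_of_ne_zero (NeZero.ne n)

instance : NeZero (6 * n) := ⟨by have := npos n; omega⟩

/-- The point of `Fin (6n)` with residue `k`. -/
def pt (k : ℕ) : Fin (6 * n) := ⟨k % (6 * n), Nat.mod_lt _ (by have := npos n; omega)⟩

@[simp] lemma pt_val (k : ℕ) : (pt n k).val = k % (6 * n) := rfl

lemma pt_val_lt {k : ℕ} (h : k < 6 * n) : (pt n k).val = k := Nat.mod_eq_of_lt h

lemma pt_eq_iff {a b : ℕ} : pt n a = pt n b ↔ a % (6 * n) = b % (6 * n) := by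
  simp [pt, Fin.ext_iff]

lemma pt_of_fin (x : Fin (6 * n)) : pt n x.val = x := by
  apply Fin.ext; simp [Nat.mod_eq_of_lt x.isLt]

lemma pt_add (a b : ℕ) : pt n a + pt n b = pt n (a + b) := by
  apply Fin.ext; simp [Fin.add_def, pt, Nat.add_mod]

lemma pt_period (a : ℕ) : pt n (a + 6 * n) = pt n a := by
  apply Fin.ext; simp [pt, Nat.add_mod_right]

lemma pt_sub {a b : ℕ} (h : b ≤ a) : pt n a - pt n b = pt n (a - b) := by
  have h2 : pt n b + pt n (a - b) = pt n a := by rw [pt_add]; congr 1; omega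
  exact (eq_sub_of_add_eq' h2).symm

lemma pt_sub_val {a b : ℕ} (h1 : b ≤ a) (h2 : a < b + 6 * n) :
    (pt n a - pt n b).val = a - b := by
  rw [pt_sub n h1, pt_val_lt n (by omega)]

lemma sub_val_ne {x y : Fin (6 * n)} (h : y ≠ x) : 0 < (y - x).val := by
  rcases Nat.eq_zero_or_pos (y - x).val with h0 | h0
  · exact absurd (Fin.ext (by simpa using h0) : y - x = 0) (sub_ne_zero.mpr h)
  · exact h0

lemma sub_val_add_sub_val {x y : Fin (6 * n)} (h : x ≠ y) :
    (y - x).val + (x - y).val = 6 * n := by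
  have hxy : x.val ≠ y.val := fun hv => h (Fin.ext hv)
  rcases Nat.lt_or_ge x.val y.val with hlt | hge
  · have e1 : (y - x).val = y.val - x.val := by
      conv_lhs => rw [← pt_of_fin n x, ← pt_of_fin n y]
      exact pt_sub_val n (by omega) (by have := y.isLt; omega)
    have e2 : (x - y).val = x.val + 6 * n - y.val := by
      conv_lhs => rw [← pt_of_fin n x, ← pt_of_fin n y, ← pt_period n x.val]
      exact pt_sub_val n (by have := y.isLt; omega) (by omega)
    have := y.isLt; omega
  · have hlt : y.val < x.val := by omega
    have e1 : (x - y).val = x.val - y.val := by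
      conv_lhs => rw [← pt_of_fin n x, ← pt_of_fin n y]
      exact pt_sub_val n (by omega) (by have := x.isLt; omega)
    have e2 : (y - x).val = y.val + 6 * n - x.val := by
      conv_lhs => rw [← pt_of_fin n x, ← pt_of_fin n y, ← pt_period n y.val]
      exact pt_sub_val n (by have := x.isLt; omega) (by omega)
    have := x.isLt; omega

lemma eq_pt_base (x b : Fin (6 * n)) : x = pt n (b.val + (x - b).val) := by
  rw [← pt_add, pt_of_fin, pt_of_fin]
  rw [add_comm]; exact (sub_add_cancel x b).symm

lemma mod_cases6 {a b : ℕ} (h : a % (6 * n) = b % (6 * n)) (hab : a ≤ b) (hb : b < a + 12 * n) :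
    b = a ∨ b = a + 6 * n := by
  have hd : 6 * n ∣ b - a := (Nat.modEq_iff_dvd' hab).mp h
  obtain ⟨k, hk⟩ := hd
  have hk2 : k ≤ 1 := by
    by_contra hk2
    have : 6 * n * 2 ≤ 6 * n * k := Nat.mul_le_mul_left _ (by omega)
    omega
  interval_cases k <;> omega

end Basic

section Word

variable (n : ℕ) [NeZero n] (S : Finset ℕ)

/-- `k` (taken mod `2n`) is an "opener" according to `S`. -/
def wrd (k : ℕ) : Prop := k % (2 * n) ∈ S

instance : DecidablePred (wrd n S) := fun k => by unfold wrd; infer_instance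

/-- The step of the height function. -/
def stp (k : ℕ) : ℤ := if wrd n S k then 1 else -1

/-- The height function of the periodized word. -/
def ht (k : ℕ) : ℤ := ∑ j ∈ range k, stp n S j

lemma ht_succ (k : ℕ) : ht n S (k + 1) = ht n S k + stp n S k := sum_range_succ _ k

lemma stp_cases (k : ℕ) : stp n S k = 1 ∨ stp n S k = -1 := by
  unfold stp; split <;> simp

lemma wrd_period (k : ℕ) : wrd n S (k + 2 * n) ↔ wrd n S k := by
  unfold wrd; rw [Nat.add_mod_right]

lemma wrd_mod2 (k : ℕ) : wrd n S (k % (2 * n)) ↔ wrd n S k := by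
  unfold wrd; rw [Nat.mod_mod_of_dvd _ dvd_rfl]

lemma wrd_of_mod2 {a b : ℕ} (h : a % (2 * n) = b % (2 * n)) : wrd n S a ↔ wrd n S b := by
  rw [← wrd_mod2 n S a, ← wrd_mod2 n S b, h]

lemma wrd_mod6 (k : ℕ) : wrd n S (k % (6 * n)) ↔ wrd n S k := by
  exact wrd_of_mod2 n S (Nat.mod_mod_of_dvd k ⟨3, by ring⟩)

variable (hS1 : S ⊆ range (2 * n)) (hS2 : S.card = n)

include hS1 hS2 in
lemma ht_2n : ht n S (2 * n) = 0 := by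
  unfold ht stp
  rw [sum_ite _ _]
  have hfeq : filter (fun j => wrd n S j) (range (2 * n)) = S := by
    ext j
    simp only [mem_filter, mem_range]
    constructor
    · rintro ⟨hj, hw⟩
      unfold wrd at hw; rwa [Nat.mod_eq_of_lt hj] at hw
    · intro hj
      have hjlt : j < 2 * n := mem_range.mp (hS1 hj)
      exact ⟨hjlt, by unfold wrd; rwa [Nat.mod_eq_of_lt hjlt]⟩
  have hcard2 : (filter (fun j => ¬ wrd n S j) (range (2 * n))).card = n := by
    have := card_filter_add_card_filter_not (s := range (2 * n))
      (p := fun j => wrd n S j)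
    rw [hfeq, hS2] at this
    simp only [card_range] at this; omega
  rw [hfeq, sum_const, sum_const, hS2, hcard2]
  simp

include hS1 hS2 in
lemma ht_period (k : ℕ) : ht n S (k + 2 * n) = ht n S k := by
  induction k with
  | zero => simpa [ht] using ht_2n n S hS1 hS2
  | succ k ih =>
      have : k + 1 + 2 * n = (k + 2 * n) + 1 := by omega
      rw [this, ht_succ, ht_succ, ih]
      have : stp n S (k + 2 * n) = stp n S k := by
        unfold stp; rw [if_congr (wrd_period n S k) rfl rfl]
      rw [this]

include hS1 hS2 in
lemma ht_add_mul (k t : ℕ) : ht n S (k + 2 * n * t) = ht n S k := by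
  induction t with
  | zero => simp
  | succ t ih =>
      have : k + 2 * n * (t + 1) = (k + 2 * n * t) + 2 * n := by ring
      rw [this, ht_period n S hS1 hS2, ih]

include hS1 hS2 in
lemma ht_6n (k : ℕ) : ht n S (k + 6 * n) = ht n S k := by
  have : k + 6 * n = k + 2 * n * 3 := by ring
  rw [this, ht_add_mul n S hS1 hS2]

include hS1 hS2 in
lemma dEx (i : ℕ) : ∃ d, 0 < d ∧ ht n S (i + d + 1) = ht n S i := by
  refine ⟨2 * n - 1, by have := npos n; omega, ?_⟩
  have : i + (2 * n - 1) + 1 = i + 2 * n := by have := npos n; omega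
  rw [this, ht_period n S hS1 hS2]

/-- Distance from an opener `i` to its partner. -/
noncomputable def dS (i : ℕ) : ℕ := Nat.find (dEx n S hS1 hS2 i)

lemma dS_pos (i : ℕ) : 0 < dS n S hS1 hS2 i := (Nat.find_spec (dEx n S hS1 hS2 i)).1

lemma dS_spec (i : ℕ) : ht n S (i + dS n S hS1 hS2 i + 1) = ht n S i :=
  (Nat.find_spec (dEx n S hS1 hS2 i)).2

lemma dS_le (i : ℕ) : dS n S hS1 hS2 i ≤ 2 * n - 1 := by
  apply Nat.find_min'
  refine ⟨by have := npos n; omega, ?_⟩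
  have : i + (2 * n - 1) + 1 = i + 2 * n := by have := npos n; omega
  rw [this, ht_period n S hS1 hS2]

lemma dS_min {i d : ℕ} (h1 : 0 < d) (h2 : d < dS n S hS1 hS2 i) :
    ht n S (i + d + 1) ≠ ht n S i := by
  have := Nat.find_min (dEx n S hS1 hS2 i) h2
  tauto

lemma dS_lt6 (i : ℕ) : dS n S hS1 hS2 i < 6 * n := by
  have := dS_le n S hS1 hS2 i; have := npos n; omega

end Word

section Word2

variable (n : ℕ) [NeZero n] (S : Finset ℕ) (hS1 : S ⊆ range (2 * n)) (hS2 : S.card = n)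

lemma ht_gt {i : ℕ} (hw : wrd n S i) :
    ∀ d, 0 < d → d ≤ dS n S hS1 hS2 i → ht n S i < ht n S (i + d) := by
  intro d
  induction d with
  | zero => omega
  | succ d ih =>
      intro _ hle
      rcases Nat.eq_zero_or_pos d with hd0 | hd0
      · subst hd0
        rw [ht_succ]
        have : stp n S i = 1 := by unfold stp; simp [hw]
        omega
      · have hlt : ht n S i < ht n S (i + d) := ih hd0 (by omega)
        have hstep := stp_cases n S (i + d)
        have hsucc : ht n S (i + d + 1) = ht n S (i + d) + stp n S (i + d) := ht_succ n S (i + d)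
        have hne : ht n S (i + d + 1) ≠ ht n S i := dS_min n S hS1 hS2 hd0 (by omega)
        have : i + (d + 1) = i + d + 1 := by omega
        rw [this]
        omega

lemma wrd_at_dS {i : ℕ} (hw : wrd n S i) : ¬ wrd n S (i + dS n S hS1 hS2 i) := by
  set d := dS n S hS1 hS2 i with hd
  have h1 : ht n S i < ht n S (i + d) := ht_gt n S hS1 hS2 hw d (dS_pos n S hS1 hS2 i) le_rfl
  have h2 : ht n S (i + d + 1) = ht n S i := dS_spec n S hS1 hS2 i
  have h3 : ht n S (i + d + 1) = ht n S (i + d) + stp n S (i + d) := ht_succ n S (i + d)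
  intro hww
  have : stp n S (i + d) = 1 := by unfold stp; simp [hww]
  omega

lemma dS_congr {i i' : ℕ} (h : ∀ k, ht n S (i' + k) = ht n S (i + k)) :
    dS n S hS1 hS2 i' = dS n S hS1 hS2 i := by
  apply le_antisymm
  · apply Nat.find_min'
    refine ⟨dS_pos n S hS1 hS2 i, ?_⟩
    have e1 : i' + dS n S hS1 hS2 i + 1 = i' + (dS n S hS1 hS2 i + 1) := by omega
    have e2 : i + dS n S hS1 hS2 i + 1 = i + (dS n S hS1 hS2 i + 1) := by omega
    rw [e1, h, ← e2, dS_spec n S hS1 hS2 i]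
    have := h 0; simpa using this.symm
  · apply Nat.find_min'
    refine ⟨dS_pos n S hS1 hS2 i', ?_⟩
    have e1 : i' + dS n S hS1 hS2 i' + 1 = i' + (dS n S hS1 hS2 i' + 1) := by omega
    have e2 : i + dS n S hS1 hS2 i' + 1 = i + (dS n S hS1 hS2 i' + 1) := by omega
    rw [e2, ← h, ← e1, dS_spec n S hS1 hS2 i']
    have := h 0; simpa using this

include hS1 hS2 in
lemma ht_of_mod2 {a b : ℕ} (h : a % (2 * n) = b % (2 * n)) (k : ℕ) :
    ht n S (a + k) = ht n S (b + k) := by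
  have ha : ht n S (a + k) = ht n S (a % (2 * n) + k) := by
    conv_lhs => rw [show a = a % (2 * n) + 2 * n * (a / (2 * n)) from (Nat.mod_add_div a (2 * n)).symm]
    rw [show a % (2 * n) + 2 * n * (a / (2 * n)) + k
        = (a % (2 * n) + k) + 2 * n * (a / (2 * n)) by ring]
    rw [ht_add_mul n S hS1 hS2]
  have hb : ht n S (b + k) = ht n S (b % (2 * n) + k) := by
    conv_lhs => rw [show b = b % (2 * n) + 2 * n * (b / (2 * n)) from (Nat.mod_add_div b (2 * n)).symm]
    rw [show b % (2 * n) + 2 * n * (b / (2 * n)) + k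
        = (b % (2 * n) + k) + 2 * n * (b / (2 * n)) by ring]
    rw [ht_add_mul n S hS1 hS2]
  rw [ha, hb, h]

lemma dS_of_mod2 {a b : ℕ} (h : a % (2 * n) = b % (2 * n)) :
    dS n S hS1 hS2 a = dS n S hS1 hS2 b := by
  exact (dS_congr n S hS1 hS2 (fun k => ht_of_mod2 n S hS1 hS2 h.symm k)).symm

lemma dS_mod6 (i : ℕ) : dS n S hS1 hS2 (i % (6 * n)) = dS n S hS1 hS2 i :=
  dS_of_mod2 n S hS1 hS2 (Nat.mod_mod_of_dvd i ⟨3, by ring⟩)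

lemma dS_6n (i : ℕ) : dS n S hS1 hS2 (i + 6 * n) = dS n S hS1 hS2 i :=
  dS_of_mod2 n S hS1 hS2 (by rw [show i + 6 * n = i + 2 * n * 3 by ring, Nat.add_mul_mod_self_left])

/-- Distinct openers have distinct partners. -/
lemma opener_inj {i i' : ℕ} (hi : wrd n S i) (hi' : wrd n S i') (hne : i ≠ i') :
    i + dS n S hS1 hS2 i ≠ i' + dS n S hS1 hS2 i' := by
  have key : ∀ j j' : ℕ, wrd n S j → wrd n S j' → j < j' →
      j + dS n S hS1 hS2 j ≠ j' + dS n S hS1 hS2 j' := by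
    intro j j' hj hj' hlt heq
    have h1 : j' < j + dS n S hS1 hS2 j := by
      have := dS_pos n S hS1 hS2 j'; omega
    have h2 : ht n S j < ht n S j' :=
      ht_gt n S hS1 hS2 hj (j' - j) (by omega)
        (by omega) |>.trans_eq (by congr 1; omega) |>.trans_le le_rfl
    have h3 : ht n S (j + dS n S hS1 hS2 j + 1) = ht n S j := dS_spec n S hS1 hS2 j
    have h4 : ht n S (j' + dS n S hS1 hS2 j' + 1) = ht n S j' := dS_spec n S hS1 hS2 j'
    rw [heq, h4] at h3
    omega
  rcases Nat.lt_or_ge i i' with h | h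
  · exact key i i' hi hi' h
  · have : i' < i := by omega
    exact fun he => key i' i hi' hi this he.symm

/-- Every closer (far enough out) has an opener. -/
lemma closer_opener {j : ℕ} (hj : ¬ wrd n S j) (h2 : 2 * n ≤ j) :
    ∃ o, wrd n S o ∧ j - 2 * n < o ∧ o < j ∧ o + dS n S hS1 hS2 o = j := by
  classical
  have hn := npos n
  set tgt := ht n S (j + 1) with htgt
  set P : ℕ → Prop := fun m => ht n S m = tgt with hP
  have hw0 : P (j + 1 - 2 * n) := by
    simp only [hP, htgt]
    conv_rhs => rw [show j + 1 = (j + 1 - 2 * n) + 2 * n by omega]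
    exact (ht_period n S hS1 hS2 _).symm
  have hw0le : j + 1 - 2 * n ≤ j := by omega
  set o := Nat.findGreatest P j with ho
  have hoP : P o := Nat.findGreatest_spec hw0le hw0
  have hole : o ≤ j := Nat.findGreatest_le j
  have hoge : j + 1 - 2 * n ≤ o := Nat.le_findGreatest hw0le hw0
  have hjstep : ht n S (j + 1) = ht n S j - 1 := by
    have := ht_succ n S j
    have hs : stp n S j = -1 := by unfold stp; simp [hj]
    omega
  have key : ∀ t, t + o + 1 ≤ j → tgt < ht n S (j - t) := by
    intro t
    induction t with
    | zero => intro _; simpa using (by omega : tgt < ht n S j)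
    | succ t ih =>
        intro hle
        have ihv : tgt < ht n S (j - t) := ih (by omega)
        have hstep := stp_cases n S (j - t - 1)
        have hsucc : ht n S (j - t - 1 + 1) = ht n S (j - t - 1) + stp n S (j - t - 1) :=
          ht_succ n S _
        have he : j - t - 1 + 1 = j - t := by omega
        rw [he] at hsucc
        have hne : ht n S (j - t - 1) ≠ tgt := by
          have hgr : ¬ P (j - t - 1) :=
            Nat.findGreatest_is_greatest (k := j - t - 1) (n := j) (by omega) (by omega)
          simpa [hP] using hgr
        have he2 : j - (t + 1) = j - t - 1 := by omega
        rw [he2]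
        omega
  have holt : o < j := by
    rcases Nat.lt_or_ge o j with h | h
    · exact h
    · exfalso
      have : o = j := by omega
      rw [this] at hoP
      simp only [hP] at hoP
      omega
  have hwo : wrd n S o := by
    have h1 : tgt < ht n S (o + 1) := by
      have := key (j - o - 1) (by omega)
      have he : j - (j - o - 1) = o + 1 := by omega
      rwa [he] at this
    have hsucc := ht_succ n S o
    have := stp_cases n S o
    simp only [hP] at hoP
    by_contra hno
    have : stp n S o = -1 := by unfold stp; simp [hno]
    omega
  refine ⟨o, hwo, by omega, holt, ?_⟩
  have hle : dS n S hS1 hS2 o ≤ j - o := by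
    apply Nat.find_min'
    refine ⟨by omega, ?_⟩
    have : o + (j - o) + 1 = j + 1 := by omega
    rw [this]
    simp only [hP] at hoP
    omega
  rcases Nat.lt_or_ge (dS n S hS1 hS2 o) (j - o) with h | h
  · exfalso
    have hspec := dS_spec n S hS1 hS2 o
    have hk := key (j - o - dS n S hS1 hS2 o - 1)
      (by have := dS_pos n S hS1 hS2 o; omega)
    have he : j - (j - o - dS n S hS1 hS2 o - 1) = o + dS n S hS1 hS2 o + 1 := by omega
    rw [he] at hk
    simp only [hP] at hoP
    omega
  · omega

end Word2

section PairHelper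

lemma pair_cases {α : Type*} [DecidableEq α] {x y a b : α} (hxy : x ≠ y)
    (h : ({x, y} : Finset α) = {a, b}) : (a = x ∧ b = y) ∨ (a = y ∧ b = x) := by
  have ha : a ∈ ({x, y} : Finset α) := by rw [h]; exact mem_insert_self a {b}
  have hb : b ∈ ({x, y} : Finset α) := by rw [h]; exact mem_insert_of_mem (mem_singleton_self b)
  have hxm : x ∈ ({a, b} : Finset α) := by rw [← h]; exact mem_insert_self x {y}
  have hym : y ∈ ({a, b} : Finset α) := by rw [← h]; exact mem_insert_of_mem (mem_singleton_self y)
  simp only [mem_insert, mem_singleton] at ha hb hxm hym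
  rcases ha with ha | ha
  · left
    refine ⟨ha, ?_⟩
    rcases hb with hb | hb
    · exfalso
      rcases hym with h1 | h1
      · exact hxy (h1.trans ha).symm
      · exact hxy (h1.trans hb).symm
    · exact hb
  · rcases hb with hb | hb
    · exact Or.inr ⟨ha, hb⟩
    · exfalso
      rcases hxm with h1 | h1
      · exact hxy (h1.trans ha)
      · exact hxy (h1.trans hb)

end PairHelper

section Chords

variable (n : ℕ) [NeZero n] (S : Finset ℕ) (hS1 : S ⊆ range (2 * n)) (hS2 : S.card = n)

lemma eq_pt_base' (x : Fin (6 * n)) (b : ℕ) : x = pt n (b + (x - pt n b).val) := by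
  have h := eq_pt_base n x (pt n b)
  exact h.trans ((pt_eq_iff n).mpr (Nat.ModEq.add_right _ (Nat.mod_modEq b (6 * n))))

lemma wrd_6n (i : ℕ) : wrd n S (i + 6 * n) ↔ wrd n S i :=
  wrd_of_mod2 n S (by rw [show i + 6 * n = i + 2 * n * 3 by ring, Nat.add_mul_mod_self_left])

/-- The chord whose opener endpoint is `i`. -/
noncomputable def κ (i : ℕ) : Finset (Fin (6 * n)) :=
  {pt n i, pt n (i + dS n S hS1 hS2 i)}

/-- The collection of chords of the matching built from `S`. -/
noncomputable def prs : Finset (Finset (Fin (6 * n))) :=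
  ((range (6 * n)).filter (fun i => wrd n S i)).image (κ n S hS1 hS2)

lemma pt_ne_partner (i : ℕ) : pt n i ≠ pt n (i + dS n S hS1 hS2 i) := by
  intro h
  rw [pt_eq_iff] at h
  have hd : 6 * n ∣ (i + dS n S hS1 hS2 i) - i := (Nat.modEq_iff_dvd' (by omega)).mp h
  rw [show i + dS n S hS1 hS2 i - i = dS n S hS1 hS2 i by omega] at hd
  have h1 := dS_pos n S hS1 hS2 i
  have h2 := dS_lt6 n S hS1 hS2 i
  have := Nat.le_of_dvd h1 hd
  omega

lemma κ_card (i : ℕ) : (κ n S hS1 hS2 i).card = 2 :=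
  card_pair (pt_ne_partner n S hS1 hS2 i)

lemma κ_mod6 (i : ℕ) : κ n S hS1 hS2 (i % (6 * n)) = κ n S hS1 hS2 i := by
  unfold κ
  rw [dS_mod6]
  congr 1
  · exact (pt_eq_iff n).mpr (Nat.mod_modEq i (6 * n))
  · congr 1
    exact (pt_eq_iff n).mpr (Nat.ModEq.add_right _ (Nat.mod_modEq i (6 * n)))

lemma κ_mem {i : ℕ} (hw : wrd n S i) : κ n S hS1 hS2 i ∈ prs n S hS1 hS2 := by
  rw [← κ_mod6]
  apply mem_image_of_mem
  rw [mem_filter, mem_range]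
  exact ⟨Nat.mod_lt _ (by have := npos n; omega), (wrd_mod6 n S i).mpr hw⟩

lemma mem_prs {f : Finset (Fin (6 * n))} (hf : f ∈ prs n S hS1 hS2) :
    ∃ o, o < 6 * n ∧ wrd n S o ∧ f = κ n S hS1 hS2 o := by
  obtain ⟨o, ho, rfl⟩ := mem_image.mp hf
  rw [mem_filter, mem_range] at ho
  exact ⟨o, ho.1, ho.2, rfl⟩

lemma prs_card_two : ∀ f ∈ prs n S hS1 hS2, f.card = 2 := by
  intro f hf
  obtain ⟨o, _, _, rfl⟩ := mem_prs n S hS1 hS2 hf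
  exact κ_card n S hS1 hS2 o

lemma partner_mod_inj {i i' : ℕ} (hi : wrd n S i) (hi' : wrd n S i')
    (hilt : i < 6 * n) (hi'lt : i' < 6 * n)
    (h : (i + dS n S hS1 hS2 i) % (6 * n) = (i' + dS n S hS1 hS2 i') % (6 * n)) : i = i' := by
  by_contra hne
  have hb := dS_le n S hS1 hS2 i
  have hb' := dS_le n S hS1 hS2 i'
  have hn := npos n
  rcases le_or_gt (i + dS n S hS1 hS2 i) (i' + dS n S hS1 hS2 i') with hle | hlt
  · rcases mod_cases6 n h hle (by omega) with he | he
    · exact opener_inj n S hS1 hS2 hi hi' hne he.symm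
    · have he2 : (i + 6 * n) + dS n S hS1 hS2 (i + 6 * n) = i' + dS n S hS1 hS2 i' := by
        rw [dS_6n]; omega
      exact opener_inj n S hS1 hS2 ((wrd_6n n S i).mpr hi) hi' (by omega) he2
  · rcases mod_cases6 n h.symm (by omega) (by omega) with he | he
    · exact opener_inj n S hS1 hS2 hi hi' hne he
    · have he2 : (i' + 6 * n) + dS n S hS1 hS2 (i' + 6 * n) = i + dS n S hS1 hS2 i := by
        rw [dS_6n]; omega
      exact opener_inj n S hS1 hS2 ((wrd_6n n S i').mpr hi') hi (by omega) he2

lemma prs_disj : ∀ f ∈ prs n S hS1 hS2, ∀ g ∈ prs n S hS1 hS2, f ≠ g → Disjoint f g := by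
  intro f hf g hg hne
  obtain ⟨o, holt, hwo, rfl⟩ := mem_prs n S hS1 hS2 hf
  obtain ⟨o', ho'lt, hwo', rfl⟩ := mem_prs n S hS1 hS2 hg
  have hoo' : o ≠ o' := fun he => hne (by rw [he])
  rw [disjoint_left]
  intro a haf hag
  unfold κ at haf hag
  simp only [mem_insert, mem_singleton] at haf hag
  have wrd_of_pt : ∀ u v : ℕ, pt n u = pt n v → (wrd n S u ↔ wrd n S v) := by
    intro u v huv
    rw [pt_eq_iff] at huv
    rw [← wrd_mod6 n S u, ← wrd_mod6 n S v, huv]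
  rcases haf with rfl | he1
  · rcases hag with he2 | he2
    · have he3 := (pt_eq_iff n).mp he2
      rw [Nat.mod_eq_of_lt holt, Nat.mod_eq_of_lt ho'lt] at he3
      exact hoo' he3
    · have := wrd_of_pt _ _ he2
      exact (wrd_at_dS n S hS1 hS2 hwo') (this.mp hwo)
  · rcases hag with he2 | he2
    · have := wrd_of_pt _ _ (he1.symm.trans he2)
      exact (wrd_at_dS n S hS1 hS2 hwo) (this.mpr hwo')
    · have hmod : (o + dS n S hS1 hS2 o) % (6 * n) = (o' + dS n S hS1 hS2 o') % (6 * n) :=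
        (pt_eq_iff n).mp (he1.symm.trans he2)
      exact hoo' (partner_mod_inj n S hS1 hS2 hwo hwo' holt ho'lt hmod)

lemma prs_cover : ∀ x : Fin (6 * n), ∃ f ∈ prs n S hS1 hS2, x ∈ f := by
  intro x
  by_cases hw : wrd n S x.val
  · refine ⟨κ n S hS1 hS2 x.val, κ_mem n S hS1 hS2 hw, ?_⟩
    unfold κ
    rw [pt_of_fin]
    exact mem_insert_self x _
  · have hn := npos n
    have hj : ¬ wrd n S (x.val + 6 * n) := fun hc => hw ((wrd_6n n S x.val).mp hc)
    obtain ⟨o, hwo, _, _, ho⟩ := closer_opener n S hS1 hS2 hj (by omega)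
    refine ⟨κ n S hS1 hS2 o, κ_mem n S hS1 hS2 hwo, ?_⟩
    have hx : pt n (o + dS n S hS1 hS2 o) = x := by rw [ho, pt_period, pt_of_fin]
    unfold κ
    rw [hx]
    exact mem_insert_of_mem (mem_singleton_self x)

lemma inside {i t : ℕ} (hi : wrd n S i) (h0 : 0 < t) (htlt : t < dS n S hS1 hS2 i)
    {f : Finset (Fin (6 * n))} (hf : f ∈ prs n S hS1 hS2) (hPf : pt n (i + t) ∈ f) :
    ∀ Q ∈ f, ∃ v, 0 < v ∧ v < dS n S hS1 hS2 i ∧ Q = pt n (i + v) := by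
  have hn := npos n
  obtain ⟨o, holt, hwo, rfl⟩ := mem_prs n S hS1 hS2 hf
  unfold κ at hPf ⊢
  simp only [mem_insert, mem_singleton] at hPf
  rcases hPf with hcase | hcase
  -- Case 1: `pt (i+t)` is the opener endpoint of `f`.
  · have homod : o = (i + t) % (6 * n) := by
      have h := (pt_eq_iff n).mp hcase
      rw [Nat.mod_eq_of_lt holt] at h
      exact h.symm
    have hwit : wrd n S (i + t) := by
      rw [← wrd_mod6 n S (i + t), ← homod]; exact hwo
    have hdo : dS n S hS1 hS2 o = dS n S hS1 hS2 (i + t) := by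
      rw [homod, dS_mod6]
    set c := dS n S hS1 hS2 (i + t) with hc
    have hcpos : 0 < c := dS_pos n S hS1 hS2 (i + t)
    have hsum : t + c < dS n S hS1 hS2 i := by
      by_contra hge
      push_neg at hge
      have hspec2 : ht n S ((i + t) + c + 1) = ht n S (i + t) := dS_spec n S hS1 hS2 (i + t)
      have hti : ht n S i < ht n S (i + t) := ht_gt n S hS1 hS2 hi t h0 (by omega)
      rcases eq_or_lt_of_le hge with heq | hgt
      · have hspec1 : ht n S (i + dS n S hS1 hS2 i + 1) = ht n S i := dS_spec n S hS1 hS2 i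
        rw [show i + dS n S hS1 hS2 i + 1 = (i + t) + c + 1 by omega] at hspec1
        omega
      · have h5 : ht n S (i + t) < ht n S ((i + t) + (dS n S hS1 hS2 i + 1 - t)) :=
          ht_gt n S hS1 hS2 hwit _ (by omega) (by omega)
        rw [show (i + t) + (dS n S hS1 hS2 i + 1 - t) = i + dS n S hS1 hS2 i + 1 by omega] at h5
        have hspec1 : ht n S (i + dS n S hS1 hS2 i + 1) = ht n S i := dS_spec n S hS1 hS2 i
        omega
    intro Q hQ
    simp only [mem_insert, mem_singleton] at hQ
    rcases hQ with rfl | rfl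
    · exact ⟨t, h0, by omega, hcase.symm⟩
    · refine ⟨t + c, by omega, hsum, ?_⟩
      apply (pt_eq_iff n).mpr
      rw [hdo]
      have h1 : o + c ≡ (i + t) + c [MOD 6 * n] :=
        Nat.ModEq.add_right _ (by rw [homod]; exact (Nat.mod_modEq _ _))
      simpa [Nat.ModEq, show (i + t) + c = i + (t + c) by omega] using h1
  -- Case 2: `pt (i+t)` is the closer endpoint of `f`.
  · have hdle : dS n S hS1 hS2 o ≤ 2 * n - 1 := dS_le n S hS1 hS2 o
    set O := i + t + 6 * n - dS n S hS1 hS2 o with hO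
    have hOmod : O % (2 * n) = o % (2 * n) := by
      have h1 : (o + dS n S hS1 hS2 o) % (6 * n) = (i + t) % (6 * n) :=
        (pt_eq_iff n).mp hcase.symm
      have h2 : (O + dS n S hS1 hS2 o) % (6 * n) = (o + dS n S hS1 hS2 o) % (6 * n) := by
        rw [show O + dS n S hS1 hS2 o = i + t + 6 * n by omega]
        rw [Nat.add_mod_right, h1]
      have h3 : O ≡ o [MOD 6 * n] := Nat.ModEq.add_right_cancel' _ h2
      exact Nat.ModEq.of_dvd ⟨3, by ring⟩ h3
    have hwO : wrd n S O := (wrd_of_mod2 n S hOmod).mpr hwo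
    have hdO : dS n S hS1 hS2 O = dS n S hS1 hS2 o := dS_of_mod2 n S hS1 hS2 hOmod
    have hOsum : O + dS n S hS1 hS2 O = i + t + 6 * n := by rw [hdO]; omega
    have hOgt : i + 6 * n < O := by
      rcases lt_trichotomy O (i + 6 * n) with h | h | h
      · exfalso
        have h1 : ht n S O < ht n S (O + (i + 6 * n - O)) :=
          ht_gt n S hS1 hS2 hwO _ (by omega) (by omega)
        rw [show O + (i + 6 * n - O) = i + 6 * n by omega] at h1
        have h2 : ht n S (i + 6 * n) = ht n S i := ht_6n n S hS1 hS2 i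
        have h3 : ht n S (O + dS n S hS1 hS2 O + 1) = ht n S O := dS_spec n S hS1 hS2 O
        rw [hOsum, show i + t + 6 * n + 1 = (i + t + 1) + 6 * n by omega,
          ht_6n n S hS1 hS2] at h3
        have h4 : ht n S i < ht n S (i + (t + 1)) :=
          ht_gt n S hS1 hS2 hi _ (by omega) (by omega)
        rw [show i + (t + 1) = i + t + 1 by omega] at h4
        omega
      · exfalso
        have hdOi : dS n S hS1 hS2 O = dS n S hS1 hS2 i := by
          rw [h, dS_6n]
        omega
      · exact h
    have hOlt : O < i + t + 6 * n := by
      have := dS_pos n S hS1 hS2 o; omega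
    set u := O - (i + 6 * n) with hu
    have hu0 : 0 < u := by omega
    have hut : u < t := by omega
    have hptO : pt n o = pt n (i + u) := by
      apply (pt_eq_iff n).mpr
      have h3 : O ≡ o [MOD 6 * n] := by
        have h1 : (o + dS n S hS1 hS2 o) % (6 * n) = (i + t) % (6 * n) :=
          (pt_eq_iff n).mp hcase.symm
        have h2 : (O + dS n S hS1 hS2 o) % (6 * n) = (o + dS n S hS1 hS2 o) % (6 * n) := by
          rw [show O + dS n S hS1 hS2 o = i + t + 6 * n by omega]
          rw [Nat.add_mod_right, h1]
        exact Nat.ModEq.add_right_cancel' _ h2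
      have h4 : O = (i + u) + 6 * n := by omega
      calc o % (6 * n) = O % (6 * n) := h3.symm
        _ = (i + u) % (6 * n) := by rw [h4, Nat.add_mod_right]
    intro Q hQ
    simp only [mem_insert, mem_singleton] at hQ
    rcases hQ with rfl | rfl
    · exact ⟨u, hu0, by omega, hptO⟩
    · exact ⟨t, h0, htlt, hcase.symm⟩

lemma prs_noncross : ∀ f ∈ prs n S hS1 hS2, ∀ g ∈ prs n S hS1 hS2, f ≠ g →
    ¬ PolyCross (6 * n) f g := by
  intro f hf g hg hne hcross
  have hn := npos n
  obtain ⟨a, b, c, d2, hfab, hgcd, hbtw1, hbtw2⟩ := hcross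
  obtain ⟨o, holt, hwo, rfl⟩ := mem_prs n S hS1 hS2 hf
  set D := dS n S hS1 hS2 o with hD
  have hD1 : 0 < D := dS_pos n S hS1 hS2 o
  have hD2 : D ≤ 2 * n - 1 := dS_le n S hS1 hS2 o
  have hval1 : (pt n (o + D) - pt n o).val = D := by
    rw [pt_sub_val n (by omega) (by omega)]; omega
  have hval2 : (pt n o - pt n (o + D)).val = 6 * n - D := by
    conv_lhs => rw [← pt_period n o]
    rw [pt_sub_val n (by omega) (by omega)]; omega
  unfold PolyBtw at hbtw1 hbtw2
  have key : ∀ P Q : Fin (6 * n), P ∈ g → Q ∈ g →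
      0 < (P - pt n o).val → (P - pt n o).val < D →
      (Q - pt n (o + D)).val < 6 * n - D → False := by
    intro P Q hPg hQg hP1 hP2 hQ2
    set s := (P - pt n o).val with hs
    have hPs : P = pt n (o + s) := eq_pt_base' n P o
    obtain ⟨v, hv0, hvD, hQv⟩ :=
      inside n S hS1 hS2 hwo hP1 hP2 hg (hPs ▸ hPg) Q hQg
    have hQval : (Q - pt n (o + D)).val = 6 * n + v - D := by
      rw [hQv]
      conv_lhs => rw [← pt_period n (o + v)]
      rw [show o + v + 6 * n = (o + D) + (6 * n + v - D) by omega]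
      rw [show pt n ((o + D) + (6 * n + v - D)) - pt n (o + D)
          = pt n (6 * n + v - D) by
        rw [← pt_add]; exact add_sub_cancel_left _ _]
      rw [pt_val_lt n (by omega)]
    omega
  have hfab' : ({pt n o, pt n (o + D)} : Finset (Fin (6 * n))) = {a, b} := hfab
  rcases pair_cases (pt_ne_partner n S hS1 hS2 o) hfab' with ⟨ha, hb⟩ | ⟨ha, hb⟩
  · -- a = pt o, b = pt (o + D)
    subst ha hb
    rw [hval1] at hbtw1
    rw [hval2] at hbtw2
    exact key c d2 (hgcd ▸ mem_insert_self c {d2})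
      (hgcd ▸ mem_insert_of_mem (mem_singleton_self d2)) hbtw1.1 hbtw1.2 hbtw2.2
  · -- a = pt (o + D), b = pt o
    subst ha hb
    rw [hval2] at hbtw1
    rw [hval1] at hbtw2
    exact key d2 c (hgcd ▸ mem_insert_of_mem (mem_singleton_self d2))
      (hgcd ▸ mem_insert_self c {d2}) hbtw2.1 hbtw2.2 hbtw1.2

/-- The non-crossing perfect matching built from `S`. -/
noncomputable def Psi : PolyNCMatching (6 * n) where
  pairs := prs n S hS1 hS2
  card_two := prs_card_two n S hS1 hS2
  disj := prs_disj n S hS1 hS2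
  cover := prs_cover n S hS1 hS2
  noncross := prs_noncross n S hS1 hS2

lemma prs_symm (r : Fin (6 * n)) (hr : r = pt n (2 * n)) :
    (prs n S hS1 hS2).image (fun e => e.image (· + r)) = prs n S hS1 hS2 := by
  subst hr
  have hn := npos n
  unfold prs
  rw [image_image]
  have hfun : ∀ i ∈ (range (6 * n)).filter (fun i => wrd n S i),
      ((fun e => e.image (· + pt n (2 * n))) ∘ κ n S hS1 hS2) i
        = (κ n S hS1 hS2 ∘ (fun i => (i + 2 * n) % (6 * n))) i := by
    intro i hi
    simp only [Function.comp_apply]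
    rw [κ_mod6]
    unfold κ
    rw [image_insert, image_singleton]
    have hdsh : dS n S hS1 hS2 (i + 2 * n) = dS n S hS1 hS2 i :=
      dS_of_mod2 n S hS1 hS2 (Nat.add_mod_right i (2 * n))
    congr 1
    · rw [pt_add]
    · rw [pt_add, hdsh]
      congr 2
      omega
  rw [image_congr hfun, ← image_image]
  congr 1
  apply eq_of_subset_of_card_le
  · intro j hj
    rw [mem_image] at hj
    obtain ⟨i, hi, rfl⟩ := hj
    rw [mem_filter, mem_range] at hi ⊢
    constructor
    · exact Nat.mod_lt _ (by omega)
    · rw [wrd_mod6 n S]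
      exact (wrd_of_mod2 n S (Nat.add_mod_right i (2 * n))).mpr hi.2
  · apply le_of_eq
    symm
    apply card_image_of_injOn
    intro a ha b hb hab
    rw [mem_coe, mem_filter, mem_range] at ha hb
    have h1 : (a + 2 * n) % (6 * n) = (b + 2 * n) % (6 * n) := hab
    have h2 : a + 2 * n ≡ b + 2 * n [MOD 6 * n] := h1
    have h3 : a ≡ b [MOD 6 * n] := Nat.ModEq.add_right_cancel' _ h2
    have h4 : a % (6 * n) = b % (6 * n) := h3
    rwa [Nat.mod_eq_of_lt ha.1, Nat.mod_eq_of_lt hb.1] at h4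

end Chords

section MSide

variable (n : ℕ) [NeZero n] (M : PolyNCMatching (6 * n))

/-- `x` is an opener of the matching `M`. -/
def Op (x : Fin (6 * n)) : Prop :=
  ∃ y, {x, y} ∈ M.pairs ∧ 0 < (y - x).val ∧ (y - x).val < 3 * n

lemma pM_ex (x : Fin (6 * n)) : ∃ y, y ≠ x ∧ {x, y} ∈ M.pairs := by
  obtain ⟨e, he, hxe⟩ := M.cover x
  obtain ⟨u, v, huv, rfl⟩ := card_eq_two.mp (M.card_two e he)
  simp only [mem_insert, mem_singleton] at hxe
  rcases hxe with rfl | rfl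
  · exact ⟨v, fun h => huv h.symm, he⟩
  · exact ⟨u, fun h => huv h, by rwa [pair_comm]⟩

/-- The partner of `x` in the matching `M`. -/
noncomputable def pM (x : Fin (6 * n)) : Fin (6 * n) := Classical.choose (pM_ex n M x)

lemma pM_ne (x : Fin (6 * n)) : pM n M x ≠ x := (Classical.choose_spec (pM_ex n M x)).1

lemma pM_mem (x : Fin (6 * n)) : {x, pM n M x} ∈ M.pairs :=
  (Classical.choose_spec (pM_ex n M x)).2

lemma chord_eq {e : Finset (Fin (6 * n))} (he : e ∈ M.pairs) {x : Fin (6 * n)} (hx : x ∈ e) :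
    e = {x, pM n M x} := by
  by_contra hne
  have hd := M.disj e he _ (pM_mem n M x) hne
  exact (disjoint_left.mp hd hx) (mem_insert_self x _)

lemma pM_invol (x : Fin (6 * n)) : pM n M (pM n M x) = x := by
  have h1 : ({x, pM n M x} : Finset _) = {pM n M x, pM n M (pM n M x)} :=
    chord_eq n M (pM_mem n M x) (mem_insert_of_mem (mem_singleton_self _))
  have hx : x ∈ ({pM n M x, pM n M (pM n M x)} : Finset _) := h1 ▸ mem_insert_self x _
  simp only [mem_insert, mem_singleton] at hx
  rcases hx with hx | hx
  · exact absurd hx.symm (pM_ne n M x)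
  · exact hx.symm

lemma Op_iff (x : Fin (6 * n)) : Op n M x ↔ (pM n M x - x).val < 3 * n := by
  constructor
  · rintro ⟨y, hy, hy1, hy2⟩
    have he : ({x, y} : Finset _) = {x, pM n M x} := chord_eq n M hy (mem_insert_self _ _)
    have hyy : y ∈ ({x, pM n M x} : Finset _) :=
      he ▸ mem_insert_of_mem (mem_singleton_self y)
    simp only [mem_insert, mem_singleton] at hyy
    rcases hyy with rfl | rfl
    · simp at hy1
    · exact hy2
  · intro h
    exact ⟨pM n M x, pM_mem n M x, sub_val_ne n (pM_ne n M x), h⟩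

lemma Op_not_both (x : Fin (6 * n)) : ¬ (Op n M x ∧ Op n M (pM n M x)) := by
  rintro ⟨h1, h2⟩
  rw [Op_iff] at h1 h2
  rw [pM_invol] at h2
  have hsum : (pM n M x - x).val + (x - pM n M x).val = 6 * n :=
    sub_val_add_sub_val n (fun he => pM_ne n M x he.symm)
  omega

lemma mod_small {a : ℕ} (h : a < 6 * n) : a % (6 * n) = a := Nat.mod_eq_of_lt h

lemma mod_mid {a : ℕ} (h1 : 6 * n ≤ a) (h2 : a < 12 * n) : a % (6 * n) = a - 6 * n := by
  rw [Nat.mod_eq_sub_mod h1, Nat.mod_eq_of_lt (by omega)]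

lemma add_ptr_val (x : Fin (6 * n)) :
    (x + pt n (2 * n)).val = (x.val + 2 * n) % (6 * n) := by
  conv_lhs => rw [← pt_of_fin n x, pt_add]
  rw [pt_val]

variable (hM : M.pairs.image (fun e => e.image (· + pt n (2 * n))) = M.pairs)

include hM in
lemma rot_mem {e : Finset (Fin (6 * n))} (he : e ∈ M.pairs) :
    e.image (· + pt n (2 * n)) ∈ M.pairs := by
  rw [← hM]
  exact mem_image_of_mem _ he

lemma ptr_val : (pt n (2 * n)).val = 2 * n := pt_val_lt n (by have := npos n; omega)

include hM in
lemma no_diam (x : Fin (6 * n)) : (pM n M x - x).val ≠ 3 * n := by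
  have hn := npos n
  have hptr := ptr_val n
  set y := pM n M x with hy
  intro h3
  have hxyne : x ≠ y := fun he => pM_ne n M x he.symm
  have hsum : (y - x).val + (x - y).val = 6 * n := sub_val_add_sub_val n hxyne
  have hxy : (x - y).val = 3 * n := by omega
  have hf : ({x, y} : Finset _).image (· + pt n (2 * n)) ∈ M.pairs :=
    rot_mem n M hM (pM_mem n M x)
  rw [image_insert, image_singleton] at hf
  have hne : ({x, y} : Finset _) ≠ {x + pt n (2 * n), y + pt n (2 * n)} := by
    intro he
    have hx2 : x ∈ ({x + pt n (2 * n), y + pt n (2 * n)} : Finset _) :=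
      he ▸ mem_insert_self x {y}
    simp only [mem_insert, mem_singleton] at hx2
    rcases hx2 with h1 | h1
    · have h2 := congrArg Fin.val h1
      rw [add_ptr_val] at h2
      rcases Nat.lt_or_ge (x.val + 2 * n) (6 * n) with hc | hc
      · rw [mod_small n hc] at h2; omega
      · rw [mod_mid n hc (by have := x.isLt; omega)] at h2
        have := x.isLt; omega
    · have h2 : x - y = pt n (2 * n) := by rw [h1]; exact add_sub_cancel_left y _
      have := congrArg Fin.val h2
      rw [hxy, hptr] at this
      omega
  have hnc := M.noncross _ (pM_mem n M x) _ hf hne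
  apply hnc
  refine ⟨x, y, x + pt n (2 * n), y + pt n (2 * n), rfl, rfl, ?_, ?_⟩
  · refine ⟨?_, ?_⟩
    · rw [add_sub_cancel_left]; omega
    · rw [add_sub_cancel_left, hptr, h3]; omega
  · refine ⟨?_, ?_⟩
    · rw [add_sub_cancel_left]; omega
    · rw [add_sub_cancel_left, hptr, hxy]; omega

include hM in
lemma Op_total (x : Fin (6 * n)) : Op n M x ∨ Op n M (pM n M x) := by
  have hxyne : x ≠ pM n M x := fun he => pM_ne n M x he.symm
  have hsum : (pM n M x - x).val + (x - pM n M x).val = 6 * n := sub_val_add_sub_val n hxyne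
  have hd1 := no_diam n M hM x
  have hd2 := no_diam n M hM (pM n M x)
  rw [pM_invol] at hd2
  rw [Op_iff, Op_iff, pM_invol]
  omega

/-- The set of openers of `M`. -/
noncomputable def OM : Finset (Fin (6 * n)) :=
  @Finset.filter _ (Op n M) (Classical.decPred _) univ

lemma mem_OM (x : Fin (6 * n)) : x ∈ OM n M ↔ Op n M x := by
  unfold OM
  rw [@mem_filter]
  simp

lemma pairs_card : M.pairs.card = 3 * n := by
  have hdisj : ∀ e ∈ M.pairs, ∀ f ∈ M.pairs, e ≠ f → Disjoint (id e) (id f) := by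
    intro e he f hf hne; exact M.disj e he f hf hne
  have hcard := card_biUnion hdisj
  have hbi : M.pairs.biUnion id = univ := by
    ext x
    simp only [mem_biUnion, id, mem_univ, iff_true]
    exact M.cover x
  rw [hbi] at hcard
  have hsum : ∑ e ∈ M.pairs, (id e).card = ∑ e ∈ M.pairs, 2 :=
    sum_congr rfl (fun e he => M.card_two e he)
  rw [hsum, sum_const, smul_eq_mul, card_univ, Fintype.card_fin] at hcard
  omega

include hM in
lemma opener_ex {e : Finset (Fin (6 * n))} (he : e ∈ M.pairs) :
    ∃ x, Op n M x ∧ e = {x, pM n M x} := by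
  obtain ⟨u, v, huv, rfl⟩ := card_eq_two.mp (M.card_two e he)
  have heq : ({u, v} : Finset _) = {u, pM n M u} :=
    chord_eq n M he (mem_insert_self u {v})
  rcases Op_total n M hM u with h | h
  · exact ⟨u, h, heq⟩
  · refine ⟨pM n M u, h, ?_⟩
    rw [pM_invol, heq]
    exact pair_comm u (pM n M u)

/-- Chosen opener of a chord. -/
noncomputable def opener (e : Finset (Fin (6 * n))) : Fin (6 * n) :=
  if he : e ∈ M.pairs then Classical.choose (opener_ex n M hM he) else 0

include hM in
lemma opener_spec {e : Finset (Fin (6 * n))} (he : e ∈ M.pairs) :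
    Op n M (opener n M hM e) ∧ e = {opener n M hM e, pM n M (opener n M hM e)} := by
  unfold opener
  rw [dif_pos he]
  exact Classical.choose_spec (opener_ex n M hM he)

include hM in
lemma OM_card : (OM n M).card = 3 * n := by
  have le1 : (OM n M).card ≤ M.pairs.card := by
    apply card_le_card_of_injOn (fun x => {x, pM n M x})
    · intro x hx
      exact pM_mem n M x
    · intro x hx x' hx' heq
      rw [mem_coe, mem_OM] at hx hx'
      have heq' : ({x, pM n M x} : Finset _) = {x', pM n M x'} := heq
      have hx2 : x' ∈ ({x, pM n M x} : Finset _) := by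
        rw [heq']; exact mem_insert_self x' _
      simp only [mem_insert, mem_singleton] at hx2
      rcases hx2 with h | h
      · exact h.symm
      · exfalso
        exact Op_not_both n M x ⟨hx, h ▸ hx'⟩
  have le2 : M.pairs.card ≤ (OM n M).card := by
    apply card_le_card_of_injOn (opener n M hM)
    · intro e he
      rw [mem_coe, mem_OM]
      exact (opener_spec n M hM he).1
    · intro e he e' he' heq
      rw [mem_coe] at he he'
      rw [(opener_spec n M hM he).2, (opener_spec n M hM he').2, heq]
  have := pairs_card n M
  omega

include hM in
lemma Op_rot (x : Fin (6 * n)) : Op n M (x + pt n (2 * n)) ↔ Op n M x := by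
  have fwd : ∀ z : Fin (6 * n), Op n M z → Op n M (z + pt n (2 * n)) := by
    intro z hz
    rw [Op_iff] at hz
    refine ⟨pM n M z + pt n (2 * n), ?_, ?_, ?_⟩
    · have := rot_mem n M hM (pM_mem n M z)
      rwa [image_insert, image_singleton] at this
    · rw [add_sub_add_right_eq_sub]
      exact sub_val_ne n (pM_ne n M z)
    · rw [add_sub_add_right_eq_sub]
      exact hz
  constructor
  · intro h
    have h2 := fwd _ (fwd _ h)
    have he : x + pt n (2 * n) + pt n (2 * n) + pt n (2 * n) = x := by
      conv_lhs => rw [← pt_of_fin n x, pt_add, pt_add, pt_add]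
      rw [show x.val + 2 * n + 2 * n + 2 * n = x.val + 6 * n by ring, pt_period, pt_of_fin]
    rwa [he] at h2
  · exact fwd x

include hM in
lemma W0_card : ((OM n M).filter (fun x => x.val < 2 * n)).card = n := by
  classical
  have hn := npos n
  set A := (OM n M).filter (fun x => x.val < 2 * n) with hA
  set B := (OM n M).filter (fun x => ¬ x.val < 2 * n ∧ x.val < 4 * n) with hB
  set C := (OM n M).filter (fun x => ¬ x.val < 2 * n ∧ ¬ x.val < 4 * n) with hC
  have hsplit : A.card + (B.card + C.card) = (OM n M).card := by
    have h1 := card_filter_add_card_filter_not (s := OM n M)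
      (p := fun x => x.val < 2 * n)
    have h2 := card_filter_add_card_filter_not
      (s := (OM n M).filter (fun x => ¬ x.val < 2 * n)) (p := fun x => x.val < 4 * n)
    rw [filter_filter, filter_filter] at h2
    rw [← h2] at h1
    exact h1
  have hB2 : B = A.image (· + pt n (2 * n)) := by
    ext z
    simp only [hA, hB, mem_image, mem_filter, mem_OM]
    constructor
    · rintro ⟨hOp, hge, hlt⟩
      refine ⟨z + pt n (4 * n), ⟨⟨?_, ?_⟩, ?_⟩⟩
      · rw [show (4 : ℕ) * n = 2 * n + 2 * n by ring, ← pt_add, ← add_assoc]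
        rw [Op_rot n M hM, Op_rot n M hM]
        exact hOp
      · rw [← pt_of_fin n z, pt_add, pt_val, mod_mid n (by omega) (by have := z.isLt; omega)]
        omega
      · rw [← pt_of_fin n z, pt_add, pt_add,
          show z.val + 4 * n + 2 * n = z.val + 6 * n by ring, pt_period, pt_of_fin]
    · rintro ⟨y, ⟨⟨hOp, hlt⟩, rfl⟩⟩
      have hv : (y + pt n (2 * n)).val = y.val + 2 * n := by
        rw [add_ptr_val, mod_small n (by omega)]
      exact ⟨(Op_rot n M hM y).mpr hOp, by omega, by omega⟩
  have hC2 : C = B.image (· + pt n (2 * n)) := by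
    ext z
    simp only [hB, hC, mem_image, mem_filter, mem_OM]
    constructor
    · rintro ⟨hOp, hge1, hge2⟩
      have := z.isLt
      refine ⟨z + pt n (4 * n), ⟨⟨?_, ?_, ?_⟩, ?_⟩⟩
      · rw [show (4 : ℕ) * n = 2 * n + 2 * n by ring, ← pt_add, ← add_assoc]
        rw [Op_rot n M hM, Op_rot n M hM]
        exact hOp
      · rw [← pt_of_fin n z, pt_add, pt_val, mod_mid n (by omega) (by omega)]
        omega
      · rw [← pt_of_fin n z, pt_add, pt_val, mod_mid n (by omega) (by omega)]
        omega
      · rw [← pt_of_fin n z, pt_add, pt_add,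
          show z.val + 4 * n + 2 * n = z.val + 6 * n by ring, pt_period, pt_of_fin]
    · rintro ⟨y, ⟨⟨hOp, hge, hlt⟩, rfl⟩⟩
      have hv : (y + pt n (2 * n)).val = y.val + 2 * n := by
        rw [add_ptr_val, mod_small n (by have := y.isLt; omega)]
      exact ⟨(Op_rot n M hM y).mpr hOp, by omega, by omega⟩
  have hBcard : B.card = A.card := by
    rw [hB2]; exact card_image_of_injective _ (add_left_injective _)
  have hCcard : C.card = B.card := by
    rw [hC2]; exact card_image_of_injective _ (add_left_injective _)
  have hOMcard := OM_card n M hM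
  omega

/-- The subset of `range (2n)` extracted from `M`. -/
noncomputable def SM : Finset ℕ := ((OM n M).filter (fun x => x.val < 2 * n)).image Fin.val

lemma SM_sub : SM n M ⊆ range (2 * n) := by
  intro k hk
  obtain ⟨x, hx, rfl⟩ := mem_image.mp hk
  rw [mem_filter] at hx
  exact mem_range.mpr hx.2

include hM in
lemma SM_card : (SM n M).card = n := by
  unfold SM
  rw [card_image_of_injective _ Fin.val_injective]
  exact W0_card n M hM

lemma SM_mem {k : ℕ} (hk : k < 2 * n) : k ∈ SM n M ↔ Op n M (pt n k) := by
  unfold SM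
  rw [mem_image]
  constructor
  · rintro ⟨x, hx, rfl⟩
    rw [mem_filter, mem_OM] at hx
    rw [pt_of_fin]
    exact hx.1
  · intro h
    refine ⟨pt n k, ?_, pt_val_lt n (by omega)⟩
    rw [mem_filter, mem_OM]
    exact ⟨h, by rw [pt_val_lt n (by omega)]; omega⟩

include hM in
lemma Op_pt_mod2 (k : ℕ) : Op n M (pt n k) ↔ Op n M (pt n (k % (2 * n))) := by
  have key : ∀ q a : ℕ, Op n M (pt n (a + 2 * n * q)) ↔ Op n M (pt n a) := by
    intro q
    induction q with
    | zero => intro a; simp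
    | succ q ih =>
        intro a
        rw [show a + 2 * n * (q + 1) = (a + 2 * n * q) + 2 * n by ring, ← pt_add]
        rw [Op_rot n M hM]
        exact ih a
  conv_lhs => rw [show k = k % (2 * n) + 2 * n * (k / (2 * n)) from (Nat.mod_add_div k (2 * n)).symm]
  exact key _ _

include hM in
lemma wrd_SM (k : ℕ) : wrd n (SM n M) k ↔ Op n M (pt n k) := by
  have hn := npos n
  unfold wrd
  rw [SM_mem n M (Nat.mod_lt _ (by omega)), ← Op_pt_mod2 n M hM]

end MSide

section MKey

variable (n : ℕ) [NeZero n] (M : PolyNCMatching (6 * n))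
variable (hM : M.pairs.image (fun e => e.image (· + pt n (2 * n))) = M.pairs)

include hM in
lemma M_inside {x : Fin (6 * n)} (hx : Op n M x) {k : ℕ}
    (hk1 : x.val < k) (hk2 : k < x.val + (pM n M x - x).val) :
    0 < (pM n M (pt n k) - x).val ∧
      (pM n M (pt n k) - x).val < (pM n M x - x).val := by
  have hn := npos n
  have ht3 : (pM n M x - x).val < 3 * n := (Op_iff n M x).mp hx
  have ht0 : 0 < (pM n M x - x).val := sub_val_ne n (pM_ne n M x)
  have hkv : (pt n k - x).val = k - x.val := by
    conv_lhs => rw [show pt n k - x = pt n k - pt n x.val by rw [pt_of_fin]]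
    rw [pt_sub_val n (by omega) (by have := x.isLt; omega)]
  have hpkx : pt n k ≠ x := by
    intro he
    rw [he, sub_self] at hkv
    simp at hkv
    omega
  have hpky : pt n k ≠ pM n M x := by
    intro he
    rw [he] at hkv
    omega
  have hef : ({x, pM n M x} : Finset _) ≠ {pt n k, pM n M (pt n k)} := by
    intro he
    have hm : pt n k ∈ ({x, pM n M x} : Finset _) := by
      rw [he]; exact mem_insert_self _ _
    simp only [mem_insert, mem_singleton] at hm
    tauto
  have hnc := M.noncross _ (pM_mem n M x) _ (pM_mem n M (pt n k)) hef
  have hbtw1 : PolyBtw (6 * n) x (pt n k) (pM n M x) := by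
    refine ⟨by rw [hkv]; omega, by rw [hkv]; omega⟩
  have hnbtw2 : ¬ PolyBtw (6 * n) (pM n M x) (pM n M (pt n k)) x := by
    intro hb
    exact hnc ⟨x, pM n M x, pt n k, pM n M (pt n k), rfl, rfl, hbtw1, hb⟩
  have hd := M.disj _ (pM_mem n M x) _ (pM_mem n M (pt n k)) hef
  have hwne : pM n M (pt n k) ∉ ({x, pM n M x} : Finset _) :=
    disjoint_right.mp hd (mem_insert_of_mem (mem_singleton_self _))
  simp only [mem_insert, mem_singleton, not_or] at hwne
  obtain ⟨hwx, hwy⟩ := hwne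
  have hxyv : (x - pM n M x).val = 6 * n - (pM n M x - x).val := by
    have := sub_val_add_sub_val n (show x ≠ pM n M x from fun he => pM_ne n M x he.symm)
    omega
  have hwy1 : 0 < (pM n M (pt n k) - pM n M x).val := sub_val_ne n hwy
  have hwyge : 6 * n - (pM n M x - x).val ≤ (pM n M (pt n k) - pM n M x).val := by
    by_contra hc
    push_neg at hc
    exact hnbtw2 ⟨hwy1, by rw [hxyv]; omega⟩
  have hwx2 : pM n M (pt n k) - x
      = (pM n M (pt n k) - pM n M x) + (pM n M x - x) :=
    (sub_add_sub_cancel _ _ _).symm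
  have hadd : (pM n M (pt n k) - x).val
      = ((pM n M (pt n k) - pM n M x).val + (pM n M x - x).val) % (6 * n) := by
    rw [hwx2, Fin.val_add]
  have hwyle : (pM n M (pt n k) - pM n M x).val < 6 * n := (pM n M (pt n k) - pM n M x).isLt
  have hmod : (pM n M (pt n k) - x).val
      = (pM n M (pt n k) - pM n M x).val + (pM n M x - x).val - 6 * n := by
    rw [hadd, mod_mid n (by omega) (by omega)]
  have hwx0 : 0 < (pM n M (pt n k) - x).val := sub_val_ne n hwx
  exact ⟨hwx0, by omega⟩

include hM in
lemma key_dS {x : Fin (6 * n)} (hx : Op n M x) :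
    dS n (SM n M) (SM_sub n M) (SM_card n M hM) x.val = (pM n M x - x).val := by
  have hn := npos n
  set t := (pM n M x - x).val with hts
  have ht3 : t < 3 * n := (Op_iff n M x).mp hx
  have ht0 : 0 < t := sub_val_ne n (pM_ne n M x)
  set σ : ℕ → ℕ := fun k => x.val + (pM n M (pt n k) - x).val with hσ
  have hσin : ∀ k, x.val < k → k < x.val + t → x.val < σ k ∧ σ k < x.val + t := by
    intro k h1 h2
    have hMi := M_inside n M hM hx h1 (by omega)
    rw [← hts] at hMi
    simp only [hσ]
    omega
  have hσpt : ∀ k, pt n (σ k) = pM n M (pt n k) := by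
    intro k
    simp only [hσ]
    have h := eq_pt_base' n (pM n M (pt n k)) x.val
    rw [pt_of_fin] at h
    exact h.symm
  have hσσ : ∀ k, x.val < k → k < x.val + t → σ (σ k) = k := by
    intro k h1 h2
    have h4 : pM n M (pt n (σ k)) = pt n k := by rw [hσpt k, pM_invol]
    have h5 : (pt n k - x).val = k - x.val := by
      conv_lhs => rw [show pt n k - x = pt n k - pt n x.val by rw [pt_of_fin]]
      rw [pt_sub_val n (by omega) (by have := x.isLt; omega)]
    conv_lhs => rw [hσ]
    simp only
    rw [h4, h5]
    omega
  have hσne : ∀ k, σ k ≠ k := by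
    intro k he
    have := hσpt k
    rw [he] at this
    exact pM_ne n M (pt n k) this.symm
  have hwrdiff : ∀ k, x.val < k → k < x.val + t → (wrd n (SM n M) k ↔ k < σ k) := by
    intro k h1 h2
    obtain ⟨hs1, hs2⟩ := hσin k h1 h2
    rw [wrd_SM n M hM, Op_iff n M (pt n k), ← hσpt k]
    rcases lt_trichotomy k (σ k) with hlt | heq | hgt
    · rw [show (pt n (σ k) - pt n k).val = σ k - k from
        pt_sub_val n (by omega) (by omega)]
      constructor
      · intro _; omega
      · intro _; omega
    · exact absurd heq.symm (hσne k)
    · have hval : (pt n (σ k) - pt n k).val = σ k + 6 * n - k := by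
        conv_lhs => rw [← pt_period n (σ k)]
        rw [pt_sub_val n (by omega) (by omega)]
      rw [hval]
      constructor
      · intro hcc; omega
      · intro hcc; omega
  -- window sums
  have hIco : ∀ s, 1 ≤ s →
      ∑ k ∈ Ico (x.val + 1) (x.val + s), stp n (SM n M) k
        = ht n (SM n M) (x.val + s) - ht n (SM n M) (x.val + 1) := by
    intro s hs
    unfold ht
    exact sum_Ico_eq_sub _ (by omega)
  have hsum_eq : ∀ s,
      ∑ k ∈ Ico (x.val + 1) (x.val + s), stp n (SM n M) k
        = (((Ico (x.val + 1) (x.val + s)).filter (fun k => wrd n (SM n M) k)).card : ℤ)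
          - (((Ico (x.val + 1) (x.val + s)).filter (fun k => ¬ wrd n (SM n M) k)).card : ℤ) := by
    intro s
    unfold stp
    rw [sum_ite, sum_const, sum_const]
    simp [nsmul_eq_mul]
    ring
  have hcard_le : ∀ s, s ≤ t →
      ((Ico (x.val + 1) (x.val + s)).filter (fun k => ¬ wrd n (SM n M) k)).card ≤
      ((Ico (x.val + 1) (x.val + s)).filter (fun k => wrd n (SM n M) k)).card := by
    intro s hs
    apply card_le_card_of_injOn σ
    · intro k hk
      rw [mem_coe, mem_filter, mem_Ico] at hk
      obtain ⟨⟨hk1, hk2⟩, hkw⟩ := hk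
      have h1 : x.val < k := by omega
      have h2 : k < x.val + t := by omega
      have hin := hσin k h1 h2
      have hlt : σ k < k := by
        rcases lt_trichotomy k (σ k) with h | h | h
        · exact absurd ((hwrdiff k h1 h2).mpr h) hkw
        · exact absurd h.symm (hσne k)
        · exact h
      rw [mem_coe, mem_filter, mem_Ico]
      refine ⟨⟨by omega, by omega⟩, ?_⟩
      rw [hwrdiff (σ k) hin.1 hin.2, hσσ k h1 h2]
      exact hlt
    · intro a ha b hb hab
      rw [mem_coe, mem_filter, mem_Ico] at ha hb
      have h1 := hσσ a (by omega) (by omega)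
      have h2 := hσσ b (by omega) (by omega)
      rw [← h1, hab, h2]
  have hcard_ge :
      ((Ico (x.val + 1) (x.val + t)).filter (fun k => wrd n (SM n M) k)).card ≤
      ((Ico (x.val + 1) (x.val + t)).filter (fun k => ¬ wrd n (SM n M) k)).card := by
    apply card_le_card_of_injOn σ
    · intro k hk
      rw [mem_coe, mem_filter, mem_Ico] at hk
      obtain ⟨⟨hk1, hk2⟩, hkw⟩ := hk
      have h1 : x.val < k := by omega
      have h2 : k < x.val + t := by omega
      have hin := hσin k h1 h2
      have hlt : k < σ k := (hwrdiff k h1 h2).mp hkw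
      rw [mem_coe, mem_filter, mem_Ico]
      refine ⟨⟨by omega, by omega⟩, ?_⟩
      rw [hwrdiff (σ k) hin.1 hin.2, hσσ k h1 h2]
      omega
    · intro a ha b hb hab
      rw [mem_coe, mem_filter, mem_Ico] at ha hb
      have h1 := hσσ a (by omega) (by omega)
      have h2 := hσσ b (by omega) (by omega)
      rw [← h1, hab, h2]
  have hwx : wrd n (SM n M) x.val := by
    rw [wrd_SM n M hM, pt_of_fin]
    exact hx
  have hstepx : ht n (SM n M) (x.val + 1) = ht n (SM n M) x.val + 1 := by
    rw [ht_succ]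
    unfold stp
    rw [if_pos hwx]
  have hgrow : ∀ s, 1 ≤ s → s ≤ t →
      ht n (SM n M) x.val + 1 ≤ ht n (SM n M) (x.val + s) := by
    intro s hs1 hs2
    have h1 := hcard_le s hs2
    have h2 := hsum_eq s
    have h3 := hIco s hs1
    rw [h2] at h3
    omega
  have hteq : ht n (SM n M) (x.val + t) = ht n (SM n M) x.val + 1 := by
    have h2 := hsum_eq t
    have h3 := hIco t (by omega)
    rw [h2] at h3
    have h1 := hcard_le t le_rfl
    omega
  have hpty : pt n (x.val + t) = pM n M x := by
    have h := eq_pt_base' n (pM n M x) x.val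
    rw [pt_of_fin, ← hts] at h
    exact h.symm
  have hwy : ¬ wrd n (SM n M) (x.val + t) := by
    rw [wrd_SM n M hM, hpty]
    intro hOpy
    have h2 := (Op_iff n M (pM n M x)).mp hOpy
    rw [pM_invol] at h2
    have hsum6 : (pM n M x - x).val + (x - pM n M x).val = 6 * n :=
      sub_val_add_sub_val n (fun he => pM_ne n M x he.symm)
    omega
  have hfinal : ht n (SM n M) (x.val + t + 1) = ht n (SM n M) x.val := by
    rw [ht_succ]
    unfold stp
    rw [if_neg hwy]
    omega
  apply le_antisymm
  · by_contra hc
    push_neg at hc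
    exact (dS_min n (SM n M) (SM_sub n M) (SM_card n M hM) ht0 hc) hfinal
  · by_contra hc
    push_neg at hc
    have hpos := dS_pos n (SM n M) (SM_sub n M) (SM_card n M hM) x.val
    have hspec := dS_spec n (SM n M) (SM_sub n M) (SM_card n M hM) x.val
    have hg := hgrow (dS n (SM n M) (SM_sub n M) (SM_card n M hM) x.val + 1)
      (by omega) (by omega)
    rw [show x.val + (dS n (SM n M) (SM_sub n M) (SM_card n M hM) x.val + 1)
        = x.val + dS n (SM n M) (SM_sub n M) (SM_card n M hM) x.val + 1 by omega] at hg
    omega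

include hM in
lemma chord_of_opener {x : Fin (6 * n)} (hx : Op n M x) :
    κ n (SM n M) (SM_sub n M) (SM_card n M hM) x.val = {x, pM n M x} := by
  unfold κ
  rw [key_dS n M hM hx]
  have h2 : pt n (x.val + (pM n M x - x).val) = pM n M x := by
    have h := eq_pt_base' n (pM n M x) x.val
    rw [pt_of_fin] at h
    exact h.symm
  rw [pt_of_fin, h2]

include hM in
lemma prs_eq : prs n (SM n M) (SM_sub n M) (SM_card n M hM) = M.pairs := by
  apply Finset.Subset.antisymm
  · intro f hf
    obtain ⟨o, holt, hwo, rfl⟩ := mem_prs n (SM n M) (SM_sub n M) (SM_card n M hM) hf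
    have hOp : Op n M (pt n o) := (wrd_SM n M hM o).mp hwo
    have h := chord_of_opener n M hM hOp
    rw [pt_val_lt n holt] at h
    rw [h]
    exact pM_mem n M (pt n o)
  · intro e he
    obtain ⟨x, hxOp, hxe⟩ := opener_ex n M hM he
    rw [hxe, ← chord_of_opener n M hM hxOp]
    apply κ_mem
    rw [wrd_SM n M hM, pt_of_fin]
    exact hxOp

end MKey

section RoundA

variable (n : ℕ) [NeZero n] (S : Finset ℕ) (hS1 : S ⊆ range (2 * n)) (hS2 : S.card = n)

lemma Op_psi (k : ℕ) : Op n (Psi n S hS1 hS2) (pt n k) ↔ wrd n S k := by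
  have hn := npos n
  constructor
  · rintro ⟨y, hy, h1, h2⟩
    have hy' : ({pt n k, y} : Finset _) ∈ prs n S hS1 hS2 := hy
    by_contra hnw
    have hj : ¬ wrd n S ((pt n k).val + 6 * n) := by
      intro hcon
      apply hnw
      have := (wrd_6n n S (pt n k).val).mp hcon
      rw [pt_val] at this
      exact (wrd_mod6 n S k).mp this
    obtain ⟨o, hwo, _, _, ho⟩ := closer_opener n S hS1 hS2 hj (by omega)
    have hpk : pt n k = pt n (o + dS n S hS1 hS2 o) := by
      rw [ho, pt_period, pt_of_fin]
    have hmem : pt n k ∈ κ n S hS1 hS2 o := by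
      unfold κ
      rw [← hpk]
      exact mem_insert_of_mem (mem_singleton_self _)
    have heq : ({pt n k, y} : Finset _) = κ n S hS1 hS2 o := by
      by_contra hne
      have hd := prs_disj n S hS1 hS2 _ hy' _ (κ_mem n S hS1 hS2 hwo) hne
      exact (disjoint_left.mp hd (mem_insert_self _ _)) hmem
    have hyk : y ≠ pt n k := by
      intro he
      rw [he, sub_self] at h1
      simp at h1
    have hymem : y ∈ κ n S hS1 hS2 o := heq ▸ mem_insert_of_mem (mem_singleton_self y)
    unfold κ at hymem
    simp only [mem_insert, mem_singleton] at hymem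
    have hyo : y = pt n o := by
      rcases hymem with h | h
      · exact h
      · exact absurd (h.trans hpk.symm) hyk
    have hdlt := dS_lt6 n S hS1 hS2 o
    have hdle := dS_le n S hS1 hS2 o
    have hdist : (y - pt n k).val = o + 6 * n - (o + dS n S hS1 hS2 o) := by
      rw [hyo, hpk]
      conv_lhs => rw [← pt_period n o]
      rw [pt_sub_val n (by omega) (by omega)]
    omega
  · intro hw
    have hdlt := dS_lt6 n S hS1 hS2 k
    have hdle := dS_le n S hS1 hS2 k
    have hdpos := dS_pos n S hS1 hS2 k
    refine ⟨pt n (k + dS n S hS1 hS2 k), ?_, ?_, ?_⟩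
    · exact κ_mem n S hS1 hS2 hw
    · rw [show pt n (k + dS n S hS1 hS2 k) - pt n k = pt n (dS n S hS1 hS2 k) by
        rw [← pt_add]; exact add_sub_cancel_left _ _]
      rw [pt_val_lt n hdlt]
      exact hdpos
    · rw [show pt n (k + dS n S hS1 hS2 k) - pt n k = pt n (dS n S hS1 hS2 k) by
        rw [← pt_add]; exact add_sub_cancel_left _ _]
      rw [pt_val_lt n hdlt]
      omega

lemma SM_Psi : SM n (Psi n S hS1 hS2) = S := by
  ext k
  constructor
  · intro hk
    have hsub := SM_sub n (Psi n S hS1 hS2) hk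
    rw [mem_range] at hsub
    have hOp := (SM_mem n (Psi n S hS1 hS2) hsub).mp hk
    have hw := (Op_psi n S hS1 hS2 k).mp hOp
    unfold wrd at hw
    rwa [Nat.mod_eq_of_lt hsub] at hw
  · intro hk
    have hklt : k < 2 * n := mem_range.mp (hS1 hk)
    rw [SM_mem n (Psi n S hS1 hS2) hklt, Op_psi n S hS1 hS2 k]
    unfold wrd
    rwa [Nat.mod_eq_of_lt hklt]

end RoundA

lemma pncm_ext {m : ℕ} {M M' : PolyNCMatching m} (h : M.pairs = M'.pairs) : M = M' := by
  cases M; cases M'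
  cases h
  rfl

/-- The main bijection. -/
noncomputable def mainEquiv (n : ℕ) [NeZero n] :
    {M : PolyNCMatching (6 * n) //
      M.pairs.image (fun e => e.image (· + pt n (2 * n))) = M.pairs}
    ≃ {S : Finset ℕ // S ⊆ range (2 * n) ∧ S.card = n} where
  toFun := fun p => ⟨SM n p.1, SM_sub n p.1, SM_card n p.1 p.2⟩
  invFun := fun s => ⟨Psi n s.1 s.2.1 s.2.2, prs_symm n s.1 s.2.1 s.2.2 _ rfl⟩
  left_inv := fun p => Subtype.ext (pncm_ext (prs_eq n p.1 p.2))
  right_inv := fun s => Subtype.ext (SM_Psi n s.1 s.2.1 s.2.2)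

end Z3Gluing

/-- The number of `Z₃`-symmetric non-crossing perfect matchings of the sides of a
regular `6n`-gon with a marked side (i.e. labeled sides) — genus-zero pairwise side
gluings invariant under the rotation by `2π/3`, the shift by `2n` — is `(2n).choose n`. -/
theorem card_Z3_symmetric_gluings (n : ℕ) (hn : 1 ≤ n) :
    Nat.card {M : PolyNCMatching (6 * n) //
        M.pairs.image (fun e => e.image (· + (⟨2 * n, by omega⟩ : Fin (6 * n)))) = M.pairs}
      = (2 * n).choose n := by
  haveI : NeZero n := ⟨by omega⟩
  have hrr : (⟨2 * n, by omega⟩ : Fin (6 * n)) = Z3Gluing.pt n (2 * n) := by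
    apply Fin.ext
    rw [Z3Gluing.pt_val, Nat.mod_eq_of_lt (by omega)]
  have e0 : {M : PolyNCMatching (6 * n) //
        M.pairs.image (fun e => e.image (· + (⟨2 * n, by omega⟩ : Fin (6 * n)))) = M.pairs}
      ≃ {M : PolyNCMatching (6 * n) //
        M.pairs.image (fun e => e.image (· + Z3Gluing.pt n (2 * n))) = M.pairs} :=
    Equiv.subtypeEquivRight (fun M => by rw [hrr])
  rw [Nat.card_congr (e0.trans (Z3Gluing.mainEquiv n))]
  have e2 : {S : Finset ℕ // S ⊆ range (2 * n) ∧ S.card = n}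
      ≃ {S : Finset ℕ // S ∈ powersetCard n (range (2 * n))} :=
    Equiv.subtypeEquivRight (fun S => (mem_powersetCard).symm)
  rw [Nat.card_congr e2]
  have h3 : Nat.card {S : Finset ℕ // S ∈ powersetCard n (range (2 * n))}
      = (powersetCard n (range (2 * n))).card :=
    Nat.card_eq_finsetCard (powersetCard n (range (2 * n)))
  rw [h3, card_powersetCard, card_range]
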